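/- Under the hypotheses of the previous statement (with ε ≤ min{μ/2, μ²/(32M), μδ/12, M}), the map g(x) := x − (∇²E_NN(x*))⁻¹ ∇E_NN(x), where E_NN = E + E_δ, maps the closed ball of radius D := (μ − √(μ² − 32Mε))/(8M) around x* into itself and is a contraction there with Lipschitz constant at most 1/2. -/

import Mathlib

open InnerProductSpace Module.End in
lemma aux_symm_lower_bound {d : ℕ} {μ : ℝ} (hμ : 0 < μ)
    (T : EuclideanSpace ℝ (Fin d) →L[ℝ] EuclideanSpace ℝ (Fin d))
    (hsymm : ∀ u v, ⟪T u, v⟫_ℝ = ⟪u, T v⟫_ℝ)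
    (heig : ∀ lam : ℝ, Module.End.HasEigenvalue T.toLinearMap lam → μ ≤ |lam|)
    (v : EuclideanSpace ℝ (Fin d)) : μ * ‖v‖ ≤ ‖T v‖ := by
  have hT : LinearMap.IsSymmetric (T.toLinearMap) := fun u v => hsymm u v
  have hn : Module.finrank ℝ (EuclideanSpace ℝ (Fin d)) = d := finrank_euclideanSpace_fin
  set b := hT.eigenvectorBasis hn with hb
  have hrepr : ∀ i, b.repr (T v) i = hT.eigenvalues hn i * b.repr v i := by
    intro i
    rw [b.repr_apply_apply, b.repr_apply_apply]
    calc ⟪b i, T v⟫_ℝ = ⟪T (b i), v⟫_ℝ := (hsymm _ _).symm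
    _ = hT.eigenvalues hn i * ⟪b i, v⟫_ℝ := by
          have h := hT.apply_eigenvectorBasis hn i
          rw [show T (b i) = hT.eigenvalues hn i • b i from h]
          simp [real_inner_smul_left, Finset.mul_sum, mul_assoc]
  have h1 : ‖T v‖ = ‖b.repr (T v)‖ := (b.repr.norm_map (T v)).symm
  have h2 : ‖v‖ = ‖b.repr v‖ := (b.repr.norm_map v).symm
  rw [h1, h2, EuclideanSpace.norm_eq, EuclideanSpace.norm_eq]
  rw [← Real.sqrt_sq hμ.le, ← Real.sqrt_mul (by positivity)]
  apply Real.sqrt_le_sqrt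
  rw [Finset.mul_sum]
  apply Finset.sum_le_sum
  intro i _
  have hev := heig _ (hT.hasEigenvalue_eigenvalues hn i)
  have hev' : μ ≤ |hT.eigenvalues hn i| := by exact_mod_cast hev
  have hsq : μ^2 ≤ (hT.eigenvalues hn i)^2 := by
    nlinarith [abs_nonneg (hT.eigenvalues hn i), sq_abs (hT.eigenvalues hn i)]
  rw [hrepr i]
  simp only [Real.norm_eq_abs, sq_abs, mul_pow]
  nlinarith [sq_nonneg (b.repr v i)]

open InnerProductSpace

noncomputable def auxDualIso (d : ℕ) :
    StrongDual ℝ (EuclideanSpace ℝ (Fin d)) ≃ₗᵢ[ℝ] EuclideanSpace ℝ (Fin d) where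
  toFun := (toDual ℝ (EuclideanSpace ℝ (Fin d))).symm
  invFun := toDual ℝ (EuclideanSpace ℝ (Fin d))
  map_add' x y := map_add _ x y
  map_smul' c x := by
    have := (toDual ℝ (EuclideanSpace ℝ (Fin d))).symm.map_smul' c x
    simpa using this
  left_inv x := (toDual ℝ (EuclideanSpace ℝ (Fin d))).apply_symm_apply x
  right_inv x := (toDual ℝ (EuclideanSpace ℝ (Fin d))).symm_apply_apply x
  norm_map' x := (toDual ℝ (EuclideanSpace ℝ (Fin d))).symm.norm_map x

lemma auxDualIso_inner {d : ℕ} (φ : StrongDual ℝ (EuclideanSpace ℝ (Fin d)))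
    (x : EuclideanSpace ℝ (Fin d)) : ⟪auxDualIso d φ, x⟫_ℝ = φ x :=
  toDual_symm_apply

lemma aux_grad_eq {d : ℕ} (f : EuclideanSpace ℝ (Fin d) → ℝ) :
    gradient f = (auxDualIso d) ∘ (fderiv ℝ f) := rfl

lemma aux_grad_contDiff {d : ℕ} (f : EuclideanSpace ℝ (Fin d) → ℝ) (hf : ContDiff ℝ 2 f) :
    ContDiff ℝ 1 (gradient f) := by
  rw [aux_grad_eq]
  exact ((auxDualIso d).toContinuousLinearEquiv.contDiff).comp
    (hf.fderiv_right (by norm_num : (1:WithTop ℕ∞) + 1 ≤ 2))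

lemma aux_hess_symm {d : ℕ} (f : EuclideanSpace ℝ (Fin d) → ℝ) (hf : ContDiff ℝ 2 f)
    (x u v : EuclideanSpace ℝ (Fin d)) :
    ⟪fderiv ℝ (gradient f) x u, v⟫_ℝ = ⟪u, fderiv ℝ (gradient f) x v⟫_ℝ := by
  have hdf : Differentiable ℝ (fderiv ℝ f) :=
    (hf.fderiv_right (by norm_num : (1:WithTop ℕ∞) + 1 ≤ 2)).differentiable one_ne_zero
  have hcomp : fderiv ℝ (gradient f) x
      = ((auxDualIso d).toContinuousLinearEquiv : _ →L[ℝ] _).comp (fderiv ℝ (fderiv ℝ f) x) := by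
    rw [aux_grad_eq]
    exact (auxDualIso d).comp_fderiv
  have hkey : ∀ w z, ⟪fderiv ℝ (gradient f) x w, z⟫_ℝ = fderiv ℝ (fderiv ℝ f) x w z := by
    intro w z
    rw [hcomp]
    exact auxDualIso_inner _ _
  have hsymm := second_derivative_symmetric
    (f' := fderiv ℝ f) (f'' := fderiv ℝ (fderiv ℝ f) x)
    (fun y => ((hf.differentiable two_ne_zero) y).hasFDerivAt)
    (hdf x).hasFDerivAt
  rw [hkey u v, real_inner_comm, hkey v u, hsymm u v]

set_option maxHeartbeats 1000000 in
/-- contraction step in the proof of Theorem 4.6: under the hypotheses of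
Theorem 4.6, the Newton-type map `g(x) = x - (∇²E_NN(x*))⁻¹ ∇E_NN(x)` maps the closed
ball of radius `D = (μ - √(μ² - 32Mε))/(8M)` around `x*` into itself and is a
contraction there with Lipschitz constant at most `1/2`. -/
theorem statement2 {d : ℕ} (E Eδ : EuclideanSpace ℝ (Fin d) → ℝ)
    (hE : ContDiff ℝ 2 E) (hEδ : ContDiff ℝ 2 Eδ)
    (xstar : EuclideanSpace ℝ (Fin d)) (hcrit : gradient E xstar = 0)
    (δ M μ L ε : ℝ) (hδ : 0 < δ) (hM : 0 < M) (hμ : 0 < μ) (hμL : μ < L)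
    (hLip : ∀ x ∈ Metric.ball xstar δ, ∀ y ∈ Metric.ball xstar δ,
      ‖fderiv ℝ (gradient E) x - fderiv ℝ (gradient E) y‖ ≤ M * ‖x - y‖)
    (hmod : ∀ x ∈ Metric.ball xstar δ, ∀ lam : ℝ,
      Module.End.HasEigenvalue
        ((fderiv ℝ (gradient E) x).toLinearMap) lam → μ ≤ |lam| ∧ |lam| ≤ L)
    (hδLip : ∀ x ∈ Metric.ball xstar δ, ∀ y ∈ Metric.ball xstar δ,
      ‖fderiv ℝ (gradient Eδ) x - fderiv ℝ (gradient Eδ) y‖ ≤ ε * ‖x - y‖)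
    (hδHess : ∀ x ∈ Metric.ball xstar δ, ‖fderiv ℝ (gradient Eδ) x‖ ≤ ε)
    (hδGrad : ∀ x ∈ Metric.ball xstar δ, ‖gradient Eδ x‖ ≤ ε)
    (hεpos : 0 < ε)
    (hεsmall : ε ≤ min (min (μ / 2) (μ ^ 2 / (32 * M))) (min (μ * δ / 12) M))
    (g : EuclideanSpace ℝ (Fin d) → EuclideanSpace ℝ (Fin d))
    (hg : ∀ x, g x = x -
      (Ring.inverse (fderiv ℝ (gradient (fun y => E y + Eδ y)) xstar))
        (gradient (fun y => E y + Eδ y) x))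
    (D : ℝ) (hD : D = (μ - Real.sqrt (μ ^ 2 - 32 * M * ε)) / (8 * M)) :
    Set.MapsTo g (Metric.closedBall xstar D) (Metric.closedBall xstar D) ∧
      LipschitzOnWith (1 / 2) g (Metric.closedBall xstar D) := by
  simp only [le_min_iff] at hεsmall
  obtain ⟨⟨hε1, hε2⟩, hε3, hε4⟩ := hεsmall
  set φ : EuclideanSpace ℝ (Fin d) → ℝ := fun y => E y + Eδ y with hφdef
  have hφ : ContDiff ℝ 2 φ := hE.add hEδ
  have hgE : Differentiable ℝ (gradient E) :=
    (aux_grad_contDiff E hE).differentiable one_ne_zero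
  have hgEδ : Differentiable ℝ (gradient Eδ) :=
    (aux_grad_contDiff Eδ hEδ).differentiable one_ne_zero
  have hgφ : Differentiable ℝ (gradient φ) :=
    (aux_grad_contDiff φ hφ).differentiable one_ne_zero
  have hsum : gradient φ = fun y => gradient E y + gradient Eδ y := by
    funext y
    rw [aux_grad_eq φ, aux_grad_eq E, aux_grad_eq Eδ]
    show auxDualIso d (fderiv ℝ φ y) = _
    rw [hφdef]
    rw [fderiv_fun_add ((hE.differentiable two_ne_zero) y) ((hEδ.differentiable two_ne_zero) y)]
    exact map_add _ _ _
  have hhess : ∀ z, fderiv ℝ (gradient φ) z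
      = fderiv ℝ (gradient E) z + fderiv ℝ (gradient Eδ) z := by
    intro z
    rw [hsum]
    exact fderiv_add (hgE z) (hgEδ z)
  set A := fderiv ℝ (gradient φ) xstar with hA
  have hxsb : xstar ∈ Metric.ball xstar δ := by simpa [Metric.mem_ball] using hδ
  -- lower bound for A
  have hHlow : ∀ v, μ * ‖v‖ ≤ ‖fderiv ℝ (gradient E) xstar v‖ :=
    aux_symm_lower_bound hμ _ (aux_hess_symm E hE xstar)
      (fun lam hl => (hmod xstar hxsb lam hl).1)
  have hAlow : ∀ v, μ / 2 * ‖v‖ ≤ ‖A v‖ := by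
    intro v
    have h1 : ‖fderiv ℝ (gradient Eδ) xstar v‖ ≤ ε * ‖v‖ :=
      (fderiv ℝ (gradient Eδ) xstar).le_of_opNorm_le (hδHess xstar hxsb) v
    have h2 : A v = fderiv ℝ (gradient E) xstar v + fderiv ℝ (gradient Eδ) xstar v := by
      rw [hA, hhess]; rfl
    have h3 := norm_add_le_of_le (le_refl ‖fderiv ℝ (gradient E) xstar v‖) h1
    have h4 : ‖fderiv ℝ (gradient E) xstar v‖
        ≤ ‖A v‖ + ε * ‖v‖ := by
      calc ‖fderiv ℝ (gradient E) xstar v‖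
          = ‖A v - fderiv ℝ (gradient Eδ) xstar v‖ := by rw [h2, add_sub_cancel_right]
        _ ≤ ‖A v‖ + ‖fderiv ℝ (gradient Eδ) xstar v‖ := norm_sub_le _ _
        _ ≤ ‖A v‖ + ε * ‖v‖ := by linarith
    have := hHlow v
    have hnv := norm_nonneg v
    nlinarith
  -- invertibility
  have hinj : Function.Injective A := by
    intro v w hvw
    have h0 : A (v - w) = 0 := by rw [map_sub, hvw, sub_self]
    have hl := hAlow (v - w)
    rw [h0, norm_zero] at hl
    have : ‖v - w‖ ≤ 0 := by nlinarith [norm_nonneg (v - w)]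
    have := le_antisymm this (norm_nonneg _)
    rwa [norm_eq_zero, sub_eq_zero] at this
  have hbij : Function.Bijective A.toLinearMap :=
    ⟨hinj, LinearMap.injective_iff_surjective.mp hinj⟩
  have hunit : IsUnit A := by
    let eL := LinearEquiv.ofBijective A.toLinearMap hbij
    let Binv : EuclideanSpace ℝ (Fin d) →L[ℝ] EuclideanSpace ℝ (Fin d) :=
      LinearMap.toContinuousLinearMap (eL.symm : _ →ₗ[ℝ] _)
    refine ⟨⟨A, Binv, ContinuousLinearMap.ext fun w => ?_,
      ContinuousLinearMap.ext fun w => ?_⟩, rfl⟩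
    · show A (eL.symm w) = w
      exact eL.apply_symm_apply w
    · show eL.symm (A w) = w
      exact eL.symm_apply_apply w
  obtain ⟨u, hu⟩ := hunit
  have hBinv : Ring.inverse A = (↑u⁻¹ : _ →L[ℝ] _) := by rw [← hu, Ring.inverse_unit]
  set B := Ring.inverse A with hB
  have hBA : ∀ w, A (B w) = w := by
    intro w
    have h := DFunLike.congr_fun u.mul_inv w
    rw [ContinuousLinearMap.mul_apply, ContinuousLinearMap.one_apply, hu] at h
    rw [hBinv]; exact h
  have hAB : ∀ v, B (A v) = v := fun v => hinj (by rw [hBA])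
  have hBbound : ∀ w, ‖B w‖ ≤ 2 / μ * ‖w‖ := by
    intro w
    have := hAlow (B w)
    rw [hBA w] at this
    have hnw := norm_nonneg w
    have hnB := norm_nonneg (B w)
    rw [div_mul_eq_mul_div, le_div_iff₀ hμ]
    nlinarith
  -- quantitative facts about D
  have hsnn : 0 ≤ μ ^ 2 - 32 * M * ε := by
    have : 32 * M * ε ≤ 32 * M * (μ ^ 2 / (32 * M)) := by
      apply mul_le_mul_of_nonneg_left hε2; positivity
    have h32 : 32 * M * (μ ^ 2 / (32 * M)) = μ ^ 2 := by field_simp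
    linarith
  have hs2 : Real.sqrt (μ ^ 2 - 32 * M * ε) ^ 2 = μ ^ 2 - 32 * M * ε :=
    Real.sq_sqrt hsnn
  have hsle : Real.sqrt (μ ^ 2 - 32 * M * ε) ≤ μ := by
    have h := Real.sqrt_le_sqrt (show μ ^ 2 - 32 * M * ε ≤ μ ^ 2 by nlinarith)
    rwa [Real.sqrt_sq hμ.le] at h
  have hsnneg : 0 ≤ Real.sqrt (μ ^ 2 - 32 * M * ε) := Real.sqrt_nonneg _
  have hD8 : 8 * M * D = μ - Real.sqrt (μ ^ 2 - 32 * M * ε) := by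
    rw [hD]; field_simp
  have hDnn : 0 ≤ D := by rw [hD]; apply div_nonneg (by linarith) (by positivity)
  have hquad : μ * D = 4 * M * D ^ 2 + 2 * ε := by nlinarith [hs2, hD8]
  have hDμ : 8 * M * D ≤ μ := by nlinarith
  have hDδ : D < δ := by nlinarith
  have hball : Metric.closedBall xstar D ⊆ Metric.ball xstar δ :=
    Metric.closedBall_subset_ball hDδ
  -- Taylor estimate
  have hTaylor : ∀ x ∈ Metric.closedBall xstar D, ∀ y ∈ Metric.closedBall xstar D,
      ‖gradient φ x - gradient φ y - A (x - y)‖ ≤ 2 * M * D * ‖x - y‖ := by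
    intro x hx y hy
    have key := Convex.norm_image_sub_le_of_norm_fderiv_le
      (f := fun z => gradient φ z - A z) (s := Metric.closedBall xstar D)
      (C := 2 * M * D)
      (fun z _ => ((hgφ z).sub (A.differentiableAt)))
      ?_ (convex_closedBall _ _) hy hx
    · have : (gradient φ x - A x) - (gradient φ y - A y)
          = gradient φ x - gradient φ y - A (x - y) := by
        rw [map_sub]; abel
      rw [this] at key
      exact key
    · intro z hz
      have hzb : z ∈ Metric.ball xstar δ := hball hz
      have hfd : fderiv ℝ (fun z => gradient φ z - A z) z
          = fderiv ℝ (gradient φ) z - A := by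
        rw [fderiv_fun_sub (hgφ z) A.differentiableAt, A.fderiv]
      rw [hfd, hhess z, hA, hhess xstar]
      have hre : fderiv ℝ (gradient E) z + fderiv ℝ (gradient Eδ) z
          - (fderiv ℝ (gradient E) xstar + fderiv ℝ (gradient Eδ) xstar)
          = (fderiv ℝ (gradient E) z - fderiv ℝ (gradient E) xstar)
          + (fderiv ℝ (gradient Eδ) z - fderiv ℝ (gradient Eδ) xstar) := by abel
      rw [hre]
      have h1 := hLip z hzb xstar hxsb
      have h2 := hδLip z hzb xstar hxsb
      have hzd : ‖z - xstar‖ ≤ D := by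
        rw [← dist_eq_norm]; exact Metric.mem_closedBall.mp hz
      have hnz := norm_nonneg (z - xstar)
      calc ‖_ + _‖ ≤ _ + _ := norm_add_le _ _
        _ ≤ M * ‖z - xstar‖ + ε * ‖z - xstar‖ := add_le_add h1 h2
        _ ≤ 2 * M * D := by nlinarith
  -- difference formula for g
  have hgdiff : ∀ x y, g x - g y = B (A (x - y) - (gradient φ x - gradient φ y)) := by
    intro x y
    rw [hg x, hg y, map_sub, hAB, map_sub]
    abel
  have hgsub : ∀ x ∈ Metric.closedBall xstar D, ∀ y ∈ Metric.closedBall xstar D,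
      ‖g x - g y‖ ≤ 4 * M * D / μ * ‖x - y‖ := by
    intro x hx y hy
    rw [hgdiff x y]
    calc ‖B (A (x - y) - (gradient φ x - gradient φ y))‖
        ≤ 2 / μ * ‖A (x - y) - (gradient φ x - gradient φ y)‖ := hBbound _
      _ = 2 / μ * ‖gradient φ x - gradient φ y - A (x - y)‖ := by rw [norm_sub_rev]
      _ ≤ 2 / μ * (2 * M * D * ‖x - y‖) := by
          apply mul_le_mul_of_nonneg_left (hTaylor x hx y hy); positivity
      _ = 4 * M * D / μ * ‖x - y‖ := by ring
  have hxscb : xstar ∈ Metric.closedBall xstar D := by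
    simpa [Metric.mem_closedBall] using hDnn
  have hφstar : ‖gradient φ xstar‖ ≤ ε := by
    have : gradient φ xstar = gradient Eδ xstar := by rw [hsum]; simp [hcrit]
    rw [this]; exact hδGrad xstar hxsb
  have hgstar : ‖g xstar - xstar‖ ≤ 2 / μ * ε := by
    rw [hg xstar]
    have : xstar - B (gradient φ xstar) - xstar = -(B (gradient φ xstar)) := by abel
    rw [this, norm_neg]
    calc ‖B (gradient φ xstar)‖ ≤ 2 / μ * ‖gradient φ xstar‖ := hBbound _
      _ ≤ 2 / μ * ε := by
          apply mul_le_mul_of_nonneg_left hφstar; positivity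
  constructor
  · intro x hx
    rw [Metric.mem_closedBall, dist_eq_norm]
    have hxd : ‖x - xstar‖ ≤ D := by
      rw [← dist_eq_norm]; exact Metric.mem_closedBall.mp hx
    calc ‖g x - xstar‖ = ‖(g x - g xstar) + (g xstar - xstar)‖ := by abel_nf
      _ ≤ ‖g x - g xstar‖ + ‖g xstar - xstar‖ := norm_add_le _ _
      _ ≤ 4 * M * D / μ * ‖x - xstar‖ + 2 / μ * ε :=
          add_le_add (hgsub x hx xstar hxscb) hgstar
      _ ≤ 4 * M * D / μ * D + 2 / μ * ε := by
          apply add_le_add_left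
          apply mul_le_mul_of_nonneg_left hxd; positivity
      _ = D := by field_simp; nlinarith [hquad]
  · apply LipschitzOnWith.of_dist_le_mul
    intro x hx y hy
    rw [dist_eq_norm, dist_eq_norm]
    have h := hgsub x hx y hy
    have hcoe : ((1 / 2 : NNReal) : ℝ) = 1 / 2 := by norm_num
    rw [hcoe]
    have hnxy := norm_nonneg (x - y)
    have hle : 4 * M * D / μ ≤ 1 / 2 := by
      rw [div_le_div_iff₀ hμ (by norm_num : (0:ℝ) < 2)]
      nlinarith
    nlinarith
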